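/- Let z₁, z₂ ∈ ℂ* and a, b, c ∈ ℂ with |a| = |b| = |c| = 1, and suppose conj(z₁)conj(z₂)·u⁴ - (conj(z₁)+conj(z₂))·u³ + (z₁+z₂)·u - z₁·z₂ = conj(z₁)conj(z₂)·(u-a)²·(u-b)·(u-c) as polynomials in u. Then |z₁·z₂| ≤ |z₁ + z₂| ≤ 2·|z₁·z₂|. -/

import Mathlib

open Complex ComplexConjugate

theorem double_and_two_simple_unimodular_zeros (z₁ z₂ a b c : ℂ)
    (hz₁ : z₁ ≠ 0) (hz₂ : z₂ ≠ 0)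
    (ha : ‖a‖ = 1) (hb : ‖b‖ = 1) (hc : ‖c‖ = 1)
    (h : ∀ u : ℂ, conj z₁ * conj z₂ * u ^ 4 - (conj z₁ + conj z₂) * u ^ 3
        + (z₁ + z₂) * u - z₁ * z₂
      = conj z₁ * conj z₂ * (u - a) ^ 2 * (u - b) * (u - c)) :
    ‖z₁ * z₂‖ ≤ ‖z₁ + z₂‖ ∧
      ‖z₁ + z₂‖ ≤ 2 * ‖z₁ * z₂‖ := by
  set p : ℂ := conj z₁ * conj z₂ with hp
  -- coefficient identities
  have eq2 : p * (a ^ 2 + 2 * a * b + 2 * a * c + b * c) = 0 := by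
    linear_combination (h 0) - (1/2 : ℂ) * (h 1) - (1/2 : ℂ) * (h (-1))
  have eq1 : (z₁ + z₂) + p * (a ^ 2 * b + a ^ 2 * c + 2 * a * b * c) = 0 := by
    linear_combination (2/3 : ℂ) * (h 1) - (2/3 : ℂ) * (h (-1))
      - (1/12 : ℂ) * (h 2) + (1/12 : ℂ) * (h (-2))
  have key : 2 * (z₁ + z₂) = p * a * (a ^ 2 - 3 * (b * c)) := by
    linear_combination (2 : ℂ) * eq1 - a * eq2
  have hpabs : ‖p‖ = ‖z₁ * z₂‖ := by
    simp [hp, norm_mul, Complex.norm_conj]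
  have habs : 2 * ‖z₁ + z₂‖
      = ‖z₁ * z₂‖ * ‖a ^ 2 - 3 * (b * c)‖ := by
    have := congrArg norm key
    simpa [norm_mul, hpabs, ha] using this
  have tri : ∀ x y : ℂ, ‖x - y‖ ≤ ‖x‖ + ‖y‖ := by
    intro x y
    calc ‖x - y‖ ≤ ‖x - 0‖ + ‖0 - y‖ :=
          norm_sub_le_norm_sub_add_norm_sub x 0 y
      _ = ‖x‖ + ‖y‖ := by rw [sub_zero, zero_sub, norm_neg]
  have tri2 : ∀ x y : ℂ, ‖x‖ - ‖y‖ ≤ ‖x - y‖ := by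
    intro x y
    have := tri (x - y) (-y)
    simp only [sub_neg_eq_add, sub_add_cancel, norm_neg] at this
    linarith
  have hbc : ‖3 * (b * c)‖ = 3 := by
    rw [norm_mul, norm_mul, hb, hc]
    simp
  have ha2 : ‖a ^ 2‖ = 1 := by
    rw [norm_pow, ha]; norm_num
  have hub : ‖a ^ 2 - 3 * (b * c)‖ ≤ 4 := by
    have := tri (a ^ 2) (3 * (b * c))
    rw [ha2, hbc] at this
    linarith
  have hlb : 2 ≤ ‖a ^ 2 - 3 * (b * c)‖ := by
    have h1 := tri2 (3 * (b * c)) (a ^ 2)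
    rw [hbc, ha2] at h1
    have h2 : ‖3 * (b * c) - a ^ 2‖ = ‖a ^ 2 - 3 * (b * c)‖ := by
      rw [show 3 * (b * c) - a ^ 2 = -(a ^ 2 - 3 * (b * c)) by ring, norm_neg]
    linarith
  have hQ : 0 < ‖z₁ * z₂‖ :=
    norm_pos_iff.mpr (mul_ne_zero hz₁ hz₂)
  constructor
  · nlinarith [mul_le_mul_of_nonneg_left hlb hQ.le]
  · nlinarith [mul_le_mul_of_nonneg_left hub hQ.le]
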